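/- arXiv:2410.05009 — 2 statements merged into one kernel-verified Lean document; each statement's English description precedes it below -/
import Mathlib

section
/- Let Δ = {(η₁,η₂) ∈ ℝ² : η₁ > 0, η₂ > 0, η₁ + η₂ < 1} and ψ(η₁,η₂) = ¼(η₁ ln η₁ + η₂ ln η₂ + (1 − η₁ − η₂) ln(1 − η₁ − η₂)) on Δ. Let X, Y > 0 with X² + Y² < 1 and set Z = √(1 − X² − Y²). Then with J(X,Y) = diag(2X, 2Y) the Jacobian of (X,Y) ↦ (X², Y²), one has J(X,Y)ᵀ · Hess ψ(X², Y²) · J(X,Y) = [[1 + X²/Z², XY/Z²], [XY/Z², 1 + Y²/Z²]], which is the matrix of the round metric of the unit 2-sphere {X² + Y² + Z² = 1} in the chart (X,Y) on the octant X,Y,Z > 0. Hence (X², Y²) are Hessian coordinates for the round sphere with Hessian potential ψ. -/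
open Real Set Matrix

/-- The Hessian potential of the generic system (s2) on the round 2-sphere
in its Hessian coordinates, defined on the open simplex. -/
noncomputable def ψ (a b : ℝ) : ℝ :=
  (a * log a + b * log b + (1 - a - b) * log (1 - a - b)) / 4

/-- Partial derivative with respect to the first variable. -/
noncomputable def d1 (f : ℝ → ℝ → ℝ) (a b : ℝ) : ℝ := deriv (fun s => f s b) a

/-- Partial derivative with respect to the second variable. -/
noncomputable def d2 (f : ℝ → ℝ → ℝ) (a b : ℝ) : ℝ := deriv (fun t => f a t) b

lemma lin_deriv (c : ℝ) (s : ℝ) : HasDerivAt (fun x : ℝ => 1 - x - c) (-1) s := by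
  have h : HasDerivAt (fun x : ℝ => 1 - x - c) (0 - 1 - 0) s :=
    (((hasDerivAt_const s (1:ℝ)).sub (hasDerivAt_id s)).sub (hasDerivAt_const s c))
  simpa using h

lemma d1_psi (a b : ℝ) (ha : 0 < a) (hab : a + b < 1) :
    d1 ψ a b = (log a - log (1 - a - b)) / 4 := by
  have h1 : (1 : ℝ) - a - b ≠ 0 := by nlinarith
  have hmain : HasDerivAt (fun s => ψ s b)
      ((log a + 1 + (log (1 - a - b) + 1) * (-1)) / 4) a := by
    have h₁ : HasDerivAt (fun s : ℝ => s * log s) (log a + 1) a :=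
      Real.hasDerivAt_mul_log (ne_of_gt ha)
    have h₂ : HasDerivAt (fun s : ℝ => (1 - s - b) * log (1 - s - b))
        ((log (1 - a - b) + 1) * (-1)) a := by
      have := (Real.hasDerivAt_mul_log h1).comp a (lin_deriv b a); exact this
    have := ((h₁.add (hasDerivAt_const a (b * log b))).add h₂).div_const 4
    simpa [ψ, add_assoc] using this
  have := hmain.deriv
  rw [d1, this]; ring

lemma d2_psi (a b : ℝ) (hb : 0 < b) (hab : a + b < 1) :
    d2 ψ a b = (log b - log (1 - a - b)) / 4 := by
  have h1 : (1 : ℝ) - a - b ≠ 0 := by nlinarith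
  have hmain : HasDerivAt (fun t => ψ a t)
      ((log b + 1 + (log (1 - a - b) + 1) * (-1)) / 4) b := by
    have h₁ : HasDerivAt (fun t : ℝ => t * log t) (log b + 1) b :=
      Real.hasDerivAt_mul_log (ne_of_gt hb)
    have h₂ : HasDerivAt (fun t : ℝ => (1 - a - t) * log (1 - a - t))
        ((log (1 - a - b) + 1) * (-1)) b := by
      have hl : HasDerivAt (fun t : ℝ => 1 - a - t) (-1) b := by
        have := (hasDerivAt_const b ((1:ℝ) - a)).sub (hasDerivAt_id b)
        simp only [zero_sub] at this; exact this
      exact (Real.hasDerivAt_mul_log h1).comp b hl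
    have := (((hasDerivAt_const b (a * log a)).add h₁).add h₂).div_const 4
    simpa [ψ, add_assoc] using this
  have := hmain.deriv
  rw [d2, this]; ring

lemma d1d1_psi (a b : ℝ) (ha : 0 < a) (hb : 0 < b) (hab : a + b < 1) :
    d1 (d1 ψ) a b = (1 / a + 1 / (1 - a - b)) / 4 := by
  have h1 : (1 : ℝ) - a - b ≠ 0 := by nlinarith
  have hev : (fun s => d1 ψ s b) =ᶠ[nhds a]
      fun s => (log s - log (1 - s - b)) / 4 := by
    filter_upwards [eventually_gt_nhds ha,
      eventually_lt_nhds (show a < 1 - b by linarith)] with s hs1 hs2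
    exact d1_psi s b hs1 (by linarith)
  have hder : HasDerivAt (fun s => (log s - log (1 - s - b)) / 4)
      ((1 / a - 1 / (1 - a - b) * (-1)) / 4) a := by
    have := ((Real.hasDerivAt_log (ne_of_gt ha)).sub
      ((Real.hasDerivAt_log h1).comp a (lin_deriv b a))).div_const 4
    simpa [Function.comp, one_div] using this
  rw [d1, hev.deriv_eq, hder.deriv]; ring

lemma d1d2_psi (a b : ℝ) (ha : 0 < a) (hb : 0 < b) (hab : a + b < 1) :
    d1 (d2 ψ) a b = (1 / (1 - a - b)) / 4 := by
  have h1 : (1 : ℝ) - a - b ≠ 0 := by nlinarith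
  have hev : (fun s => d2 ψ s b) =ᶠ[nhds a]
      fun s => (log b - log (1 - s - b)) / 4 := by
    filter_upwards [eventually_gt_nhds ha,
      eventually_lt_nhds (show a < 1 - b by linarith)] with s hs1 hs2
    exact d2_psi s b hb (by linarith)
  have hder : HasDerivAt (fun s => (log b - log (1 - s - b)) / 4)
      ((0 - 1 / (1 - a - b) * (-1)) / 4) a := by
    have := (((hasDerivAt_const a (log b)).sub
      ((Real.hasDerivAt_log h1).comp a (lin_deriv b a)))).div_const 4
    simpa [Function.comp, one_div] using this
  rw [d1, hev.deriv_eq, hder.deriv]; ring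

lemma d2d1_psi (a b : ℝ) (ha : 0 < a) (hb : 0 < b) (hab : a + b < 1) :
    d2 (d1 ψ) a b = (1 / (1 - a - b)) / 4 := by
  have h1 : (1 : ℝ) - a - b ≠ 0 := by nlinarith
  have hl : HasDerivAt (fun t : ℝ => 1 - a - t) (-1) b := by
    have := (hasDerivAt_const b ((1:ℝ) - a)).sub (hasDerivAt_id b)
    simp only [zero_sub] at this; exact this
  have hev : (fun t => d1 ψ a t) =ᶠ[nhds b]
      fun t => (log a - log (1 - a - t)) / 4 := by
    filter_upwards [eventually_gt_nhds hb,
      eventually_lt_nhds (show b < 1 - a by linarith)] with t ht1 ht2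
    exact d1_psi a t ha (by linarith)
  have hder : HasDerivAt (fun t => (log a - log (1 - a - t)) / 4)
      ((0 - 1 / (1 - a - b) * (-1)) / 4) b := by
    have := ((hasDerivAt_const b (log a)).sub
      ((Real.hasDerivAt_log h1).comp b hl)).div_const 4
    simpa [Function.comp, one_div] using this
  rw [d2, hev.deriv_eq, hder.deriv]; ring

lemma d2d2_psi (a b : ℝ) (ha : 0 < a) (hb : 0 < b) (hab : a + b < 1) :
    d2 (d2 ψ) a b = (1 / b + 1 / (1 - a - b)) / 4 := by
  have h1 : (1 : ℝ) - a - b ≠ 0 := by nlinarith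
  have hl : HasDerivAt (fun t : ℝ => 1 - a - t) (-1) b := by
    have := (hasDerivAt_const b ((1:ℝ) - a)).sub (hasDerivAt_id b)
    simp only [zero_sub] at this; exact this
  have hev : (fun t => d2 ψ a t) =ᶠ[nhds b]
      fun t => (log t - log (1 - a - t)) / 4 := by
    filter_upwards [eventually_gt_nhds hb,
      eventually_lt_nhds (show b < 1 - a by linarith)] with t ht1 ht2
    exact d2_psi a t ht1 (by linarith)
  have hder : HasDerivAt (fun t => (log t - log (1 - a - t)) / 4)
      ((1 / b - 1 / (1 - a - b) * (-1)) / 4) b := by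
    have := ((Real.hasDerivAt_log (ne_of_gt hb)).sub
      ((Real.hasDerivAt_log h1).comp b hl)).div_const 4
    simpa [Function.comp, one_div] using this
  rw [d2, hev.deriv_eq, hder.deriv]; ring

/-- The matrix of second partial derivatives of a function of two variables. -/
noncomputable def Hess (f : ℝ → ℝ → ℝ) (a b : ℝ) : Matrix (Fin 2) (Fin 2) ℝ :=
  !![d1 (d1 f) a b, d1 (d2 f) a b;
     d2 (d1 f) a b, d2 (d2 f) a b]

/-- The Jacobian matrix of the coordinate change `(X,Y) ↦ (X², Y²)`. -/
noncomputable def J (x y : ℝ) : Matrix (Fin 2) (Fin 2) ℝ := !![2 * x, 0; 0, 2 * y]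

/-- `(X², Y²)` are Hessian coordinates for the round metric of the unit
2-sphere on the octant `X, Y, Z > 0`, with Hessian potential `ψ`: with
`Z = √(1 − X² − Y²)`, one has
`J(X,Y)ᵀ · Hess ψ(X²,Y²) · J(X,Y) = [[1 + X²/Z², XY/Z²], [XY/Z², 1 + Y²/Z²]]`,
the component matrix of the round metric in the chart `(X,Y)`. -/
theorem s2_hessian_coordinates_round_metric :
    ∀ X Y : ℝ, 0 < X → 0 < Y → X ^ 2 + Y ^ 2 < 1 →
      (J X Y)ᵀ * Hess ψ (X ^ 2) (Y ^ 2) * J X Y =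
        !![1 + X ^ 2 / Real.sqrt (1 - X ^ 2 - Y ^ 2) ^ 2,
           X * Y / Real.sqrt (1 - X ^ 2 - Y ^ 2) ^ 2;
           X * Y / Real.sqrt (1 - X ^ 2 - Y ^ 2) ^ 2,
           1 + Y ^ 2 / Real.sqrt (1 - X ^ 2 - Y ^ 2) ^ 2] := by
  intro X Y hX hY h
  have ha : 0 < X ^ 2 := by positivity
  have hb : 0 < Y ^ 2 := by positivity
  have hZ : Real.sqrt (1 - X ^ 2 - Y ^ 2) ^ 2 = 1 - X ^ 2 - Y ^ 2 :=
    Real.sq_sqrt (by linarith)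
  have hc : (0:ℝ) < 1 - X ^ 2 - Y ^ 2 := by linarith
  rw [hZ]
  rw [show Hess ψ (X ^ 2) (Y ^ 2) =
      !![(1 / X ^ 2 + 1 / (1 - X ^ 2 - Y ^ 2)) / 4,
         (1 / (1 - X ^ 2 - Y ^ 2)) / 4;
         (1 / (1 - X ^ 2 - Y ^ 2)) / 4,
         (1 / Y ^ 2 + 1 / (1 - X ^ 2 - Y ^ 2)) / 4] by
    rw [Hess, d1d1_psi _ _ ha hb h, d1d2_psi _ _ ha hb h,
        d2d1_psi _ _ ha hb h, d2d2_psi _ _ ha hb h]]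
  have hJT : (_root_.J X Y)ᵀ = _root_.J X Y := by
    ext i j
    fin_cases i <;> fin_cases j <;> simp [_root_.J]
  rw [hJT]
  ext i j
  fin_cases i <;> fin_cases j <;>
    simp [_root_.J, Matrix.mul_apply, Fin.sum_univ_two] <;>
    field_simp <;> ring
end

section
/- Let Δ = {(η₁,η₂) ∈ ℝ² : η₁ > 0, η₂ > 0, η₁ + η₂ < 1} and ψ(η₁,η₂) = ¼(η₁ ln η₁ + η₂ ln η₂ + (1 − η₁ − η₂) ln(1 − η₁ − η₂)) on Δ. Then, writing η₃ = 1 − η₁ − η₂, the gradient is ∇ψ(η) = (¼ ln(η₁/η₃), ¼ ln(η₂/η₃)), and the dual Hessian potential satisfies ⟨∇ψ(η), η⟩ − ψ(η) = −¼ ln(1 − η₁ − η₂) for all η ∈ Δ. (These are the dual Hessian coordinates and dual Hessian potential of the generic system (s2) on the round 2-sphere.) -/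
open Real Set

lemma aux_deriv (a b : ℝ) (ha : a ≠ 0) (hc : 1 - a - b ≠ 0) :
    HasDerivAt (fun s => ψ s b) ((log a - log (1 - a - b)) / 4) a := by
  have h1 : HasDerivAt (fun s : ℝ => s * log s) (log a + 1) a :=
    Real.hasDerivAt_mul_log ha
  have h2 : HasDerivAt (fun s : ℝ => 1 - s - b) (-1) a := by
    simpa using ((hasDerivAt_id a).const_sub 1).sub_const b
  have h3 : HasDerivAt (fun s : ℝ => (1 - s - b) * log (1 - s - b))
      ((log (1 - a - b) + 1) * (-1)) a :=
    by have := (Real.hasDerivAt_mul_log hc).comp a h2; exact this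
  have h4 := ((h1.add_const (b * log b)).add h3).div_const 4
  exact h4.congr_deriv (by ring)

/-- For the generic system (s2): writing `η₃ = 1 − η₁ − η₂`, the gradient of
`ψ` (the dual Hessian coordinates) is `∇ψ(η) = (¼ ln(η₁/η₃), ¼ ln(η₂/η₃))`,
and the dual Hessian potential is
`⟨∇ψ(η), η⟩ − ψ(η) = −¼ ln(1 − η₁ − η₂)` on the open simplex. -/
theorem s2_dual_coordinates_and_potential :
    ∀ a b : ℝ, 0 < a → 0 < b → a + b < 1 →
      d1 ψ a b = (1 / 4) * log (a / (1 - a - b)) ∧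
      d2 ψ a b = (1 / 4) * log (b / (1 - a - b)) ∧
      d1 ψ a b * a + d2 ψ a b * b - ψ a b = -(1 / 4) * log (1 - a - b) := by
  intro a b ha hb hab
  have hc : (0:ℝ) < 1 - a - b := by linarith
  have h1 : d1 ψ a b = (log a - log (1 - a - b)) / 4 :=
    (aux_deriv a b ha.ne' hc.ne').deriv
  have h2 : d2 ψ a b = (log b - log (1 - a - b)) / 4 := by
    have : HasDerivAt (fun t => ψ a t) ((log b - log (1 - a - b)) / 4) b := by
      have := aux_deriv b a hb.ne' (by rw [show 1 - b - a = 1 - a - b by ring]; exact hc.ne')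
      rw [show 1 - b - a = 1 - a - b by ring] at this
      convert this using 1
      ext t; simp [ψ]; ring
    exact this.deriv
  refine ⟨?_, ?_, ?_⟩
  · rw [h1, log_div ha.ne' hc.ne']; ring
  · rw [h2, log_div hb.ne' hc.ne']; ring
  · rw [h1, h2, ψ]
    have : (1 - a - b) * log (1 - a - b) = log (1 - a - b) - (a + b) * log (1 - a - b) := by ring
    rw [this]; ring
end
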